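/- arXiv:2311.11800 — 5 statements merged into one kernel-verified Lean document; each statement's English description precedes it below -/
import Mathlib

section
/- Let (X, Σ, μ) be a measure space and u ∈ L²(X, μ; 𝔽ⁿ). Then u is a continuous frame (i.e. there exist A, B > 0 with A‖v‖² ≤ ∫_X |⟨v, u_x⟩|² dμ(x) ≤ B‖v‖² for all v ∈ 𝔽ⁿ) if and only if the component functions u^1, …, u^n are linearly independent in L²(X, μ; 𝔽). -/
open MeasureTheory

private lemma lp_coeFn_sum {𝕜 X : Type*} [RCLike 𝕜] [MeasurableSpace X] {μ : Measure X}
    {ι : Type*} (s : Finset ι) (f : ι → Lp 𝕜 2 μ) :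
    (↑↑(∑ i ∈ s, f i) : X → 𝕜) =ᵐ[μ] fun x => ∑ i ∈ s, (f i : X → 𝕜) x := by
  induction s using Finset.cons_induction with
  | empty => simp only [Finset.sum_empty]; exact Lp.coeFn_zero 𝕜 2 μ
  | cons a s ha ih =>
      simp only [Finset.sum_cons]
      filter_upwards [Lp.coeFn_add (f a) (∑ i ∈ s, f i), ih] with x h1 h2
      rw [h1, Pi.add_apply, h2]

private lemma l2_norm_sq {𝕜 X : Type*} [RCLike 𝕜] [MeasurableSpace X] {μ : Measure X}
    (g : Lp 𝕜 2 μ) : ‖g‖ ^ 2 = ∫ x, ‖(g : X → 𝕜) x‖ ^ 2 ∂μ := by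
  rw [@norm_sq_eq_re_inner 𝕜, L2.inner_def]
  have h : ∀ x, (inner 𝕜 ((g : X → 𝕜) x) ((g : X → 𝕜) x) : 𝕜) = ((‖(g : X → 𝕜) x‖ ^ 2 : ℝ) : 𝕜) := by
    intro x; rw [inner_self_eq_norm_sq_to_K]; push_cast; ring
  simp_rw [h, integral_ofReal, RCLike.ofReal_re]

theorem stmt7 {𝕜 X : Type*} [RCLike 𝕜] [MeasurableSpace X] (μ : Measure X) {n : ℕ}
    (u : X → EuclideanSpace 𝕜 (Fin n)) (hu : MemLp u 2 μ)
    (hk : ∀ k : Fin n, MemLp (fun x => u x k) 2 μ) :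
    (∃ A B : ℝ, 0 < A ∧ 0 < B ∧ ∀ v : EuclideanSpace 𝕜 (Fin n),
        A * ‖v‖ ^ 2 ≤ ∫ x, ‖(inner 𝕜 v (u x) : 𝕜)‖ ^ 2 ∂μ ∧
        ∫ x, ‖(inner 𝕜 v (u x) : 𝕜)‖ ^ 2 ∂μ ≤ B * ‖v‖ ^ 2)
      ↔ LinearIndependent 𝕜 fun k : Fin n => (hk k).toLp fun x => u x k := by
  set f : Fin n → Lp 𝕜 2 μ := fun k => (hk k).toLp fun x => u x k with hf
  set T : EuclideanSpace 𝕜 (Fin n) → Lp 𝕜 2 μ :=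
    fun v => ∑ k, (starRingEnd 𝕜 (v k)) • f k with hT
  have key : ∀ v : EuclideanSpace 𝕜 (Fin n),
      ∫ x, ‖(inner 𝕜 v (u x) : 𝕜)‖ ^ 2 ∂μ = ‖T v‖ ^ 2 := by
    intro v
    rw [l2_norm_sq]
    refine (integral_congr_ae ?_).symm
    have h1 := lp_coeFn_sum Finset.univ (fun k => (starRingEnd 𝕜 (v k)) • f k)
    have h2 : ∀ᵐ x ∂μ, ∀ k : Fin n, (f k : X → 𝕜) x = u x k :=
      ae_all_iff.mpr fun k => (hk k).coeFn_toLp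
    have h3 : ∀ᵐ x ∂μ, ∀ k : Fin n,
        ((starRingEnd 𝕜 (v k)) • f k : Lp 𝕜 2 μ) x = (starRingEnd 𝕜 (v k)) • (f k : X → 𝕜) x :=
      ae_all_iff.mpr fun k => Lp.coeFn_smul _ _
    filter_upwards [h1, h2, h3] with x hx1 hx2 hx3
    have : ((T v : Lp 𝕜 2 μ) : X → 𝕜) x = ∑ k, (starRingEnd 𝕜 (v k)) * u x k := by
      rw [hT, hx1]
      exact Finset.sum_congr rfl fun k _ => by rw [hx3 k, hx2 k, smul_eq_mul]
    rw [this, PiLp.inner_apply]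
    simp only [RCLike.inner_apply']
  have hTscale : ∀ (c : 𝕜) (v : EuclideanSpace 𝕜 (Fin n)),
      T (c • v) = (starRingEnd 𝕜 c) • T v := by
    intro c v
    rw [hT, Finset.smul_sum]
    refine Finset.sum_congr rfl fun k _ => ?_
    have : (c • v) k = c * v k := rfl
    rw [this, map_mul, mul_smul]
  constructor
  · rintro ⟨A, B, hA, hB, hAB⟩
    rw [Fintype.linearIndependent_iff]
    intro g hg k
    set v : EuclideanSpace 𝕜 (Fin n) := WithLp.toLp 2 (fun j => starRingEnd 𝕜 (g j)) with hv
    have hTv : T v = 0 := by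
      rw [hT]
      have : ∀ j, starRingEnd 𝕜 (v j) = g j := fun j => by
        simp [hv, RCLike.conj_conj]
      simp only [this]
      exact hg
    have h0 : ∫ x, ‖(inner 𝕜 v (u x) : 𝕜)‖ ^ 2 ∂μ = 0 := by
      rw [key, hTv]; simp
    have := (hAB v).1
    rw [h0] at this
    have hv0 : v = 0 := by
      by_contra hvne
      have : 0 < ‖v‖ ^ 2 := pow_pos (norm_pos_iff.mpr hvne) 2
      nlinarith
    have : v k = 0 := by rw [hv0]; rfl
    have : starRingEnd 𝕜 (g k) = 0 := this
    simpa using congrArg (starRingEnd 𝕜) this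
  · intro hLI
    have hTcont : Continuous T := by
      apply continuous_finset_sum
      intro k _
      exact ((RCLike.continuous_conj.comp (EuclideanSpace.proj k).continuous)).smul
        continuous_const
    set φ : EuclideanSpace 𝕜 (Fin n) → ℝ := fun v => ‖T v‖ ^ 2 with hφ
    have hφcont : Continuous φ := (hTcont.norm).pow 2
    have hφpos : ∀ v : EuclideanSpace 𝕜 (Fin n), v ≠ 0 → 0 < φ v := by
      intro v hvne
      rcases lt_or_eq_of_le (by positivity : (0:ℝ) ≤ φ v) with h | h
      · exact h
      exfalso
      have hTv : T v = 0 := by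
        have : ‖T v‖ = 0 := by
          have := h.symm
          rw [hφ] at this
          simpa [pow_eq_zero_iff] using this
        simpa using this
      have := Fintype.linearIndependent_iff.mp hLI (fun k => starRingEnd 𝕜 (v k)) hTv
      apply hvne
      ext k
      have := congrArg (starRingEnd 𝕜) (this k)
      simpa using this
    by_cases hn : n = 0
    · refine ⟨1, 1, one_pos, one_pos, fun v => ?_⟩
      subst hn
      have hv0 : v = 0 := Subsingleton.elim v 0
      have : ∫ x, ‖(inner 𝕜 v (u x) : 𝕜)‖ ^ 2 ∂μ = 0 := by
        rw [key v, hv0]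
        have : T (0 : EuclideanSpace 𝕜 (Fin 0)) = 0 := by simp [hT]
        rw [this]; simp
      rw [this, hv0]
      norm_num
    · have : Nontrivial (EuclideanSpace 𝕜 (Fin n)) := by
        have : 0 < n := Nat.pos_of_ne_zero hn
        exact ⟨EuclideanSpace.single ⟨0, this⟩ 1, 0, by
          intro h
          have := congrArg (fun w : EuclideanSpace 𝕜 (Fin n) => w ⟨0, this⟩) h
          simp [EuclideanSpace.single_apply] at this⟩
      obtain ⟨v₀, hv₀mem, hv₀min'⟩ :=
        (isCompact_sphere (0 : EuclideanSpace 𝕜 (Fin n)) 1).exists_isMinOn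
          (NormedSpace.sphere_nonempty.mpr zero_le_one) hφcont.continuousOn
      obtain ⟨w₀, hw₀mem, hw₀max'⟩ :=
        (isCompact_sphere (0 : EuclideanSpace 𝕜 (Fin n)) 1).exists_isMaxOn
          (NormedSpace.sphere_nonempty.mpr zero_le_one) hφcont.continuousOn
      have hv₀min := isMinOn_iff.mp hv₀min'
      have hw₀max := isMaxOn_iff.mp hw₀max'
      have hv₀ne : v₀ ≠ 0 := by
        intro h
        rw [mem_sphere_iff_norm, sub_zero] at hv₀mem
        rw [h] at hv₀mem; simp at hv₀mem
      refine ⟨φ v₀, φ w₀ + 1, hφpos v₀ hv₀ne, by positivity, fun v => ?_⟩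
      rw [key v]
      by_cases hv : v = 0
      · subst hv
        have : T (0 : EuclideanSpace 𝕜 (Fin n)) = 0 := by simp [hT]
        rw [this]; simp
      · set w : EuclideanSpace 𝕜 (Fin n) := (‖v‖ : 𝕜)⁻¹ • v with hw
        have hvnorm : (0:ℝ) < ‖v‖ := norm_pos_iff.mpr hv
        have hwnorm : ‖w‖ = 1 := by
          rw [hw, norm_smul]
          simp [norm_inv, abs_of_pos hvnorm]
          field_simp
        have hwmem : w ∈ Metric.sphere (0 : EuclideanSpace 𝕜 (Fin n)) 1 := by
          simpa [mem_sphere_iff_norm] using hwnorm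
        have hvw : v = (‖v‖ : 𝕜) • w := by
          rw [hw, smul_smul]
          rw [mul_inv_cancel₀ (by exact_mod_cast hvnorm.ne')]
          simp
        have hTv : T v = ((‖v‖ : ℝ) : 𝕜) • T w := by
          conv_lhs => rw [hvw]
          rw [hTscale]
          congr 1
          exact RCLike.conj_ofReal _
        have hφv : φ v = ‖v‖ ^ 2 * φ w := by
          show ‖T v‖ ^ 2 = ‖v‖ ^ 2 * ‖T w‖ ^ 2
          rw [hTv, norm_smul, RCLike.norm_ofReal, abs_of_pos hvnorm]
          ring
        have h1 := hv₀min w hwmem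
        have h2 := hw₀max w hwmem
        constructor
        · calc φ v₀ * ‖v‖ ^ 2 ≤ φ w * ‖v‖ ^ 2 :=
              mul_le_mul_of_nonneg_right h1 (sq_nonneg _)
            _ = φ v := by rw [hφv]; ring
        · calc φ v = φ w * ‖v‖ ^ 2 := by rw [hφv]; ring
            _ ≤ (φ w₀ + 1) * ‖v‖ ^ 2 :=
              mul_le_mul_of_nonneg_right (by linarith) (sq_nonneg _)
end

section
/- Let a, b ∈ ℝ with a − b ∉ ℤ. Then u = ((1/n)e^{2πi a n}, (1/n)e^{2πi b n})_{n∈ℕ*} is a classical frame in ℂ²: there exist A, B > 0 such that for all v ∈ ℂ², A‖v‖² ≤ Σ_{n≥1} |⟨v, u_n⟩|² ≤ B‖v‖². -/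
open Complex

private lemma conj_exp_aux (r : ℂ) (hr : r.im = 0) (n : ℕ) :
    (starRingEnd ℂ) (Complex.exp (2 * Real.pi * Complex.I * r * n)) =
      Complex.exp (-(2 * Real.pi * Complex.I * r * n)) := by
  rw [← Complex.exp_conj]
  congr 1
  have : (starRingEnd ℂ) r = r := Complex.conj_eq_iff_im.mpr hr
  simp only [map_mul, Complex.conj_I, Complex.conj_ofReal, map_ofNat, map_natCast, this]
  ring

private lemma term_eq (a b : ℝ) (v0 v1 : ℂ) (n : ℕ+) :
    ‖v0 * (starRingEnd ℂ) ((1 / ((n : ℕ) : ℂ)) * Complex.exp (2 * Real.pi * Complex.I * a * (n : ℕ)))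
      + v1 * (starRingEnd ℂ) ((1 / ((n : ℕ) : ℂ)) * Complex.exp (2 * Real.pi * Complex.I * b * (n : ℕ)))‖ ^ 2
    = (‖v0‖ ^ 2 + ‖v1‖ ^ 2) * (1 / ((n : ℕ) : ℝ) ^ 2)
      + 2 * (v0 * (starRingEnd ℂ) v1 *
          (Complex.exp (2 * Real.pi * Complex.I * ((b : ℂ) - (a : ℂ)) * (n : ℕ)) / ((n : ℕ) : ℂ) ^ 2)).re := by
  have hn : ((n : ℕ) : ℂ) ≠ 0 := Nat.cast_ne_zero.mpr n.pos.ne'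
  set x := v0 * (starRingEnd ℂ) ((1 / ((n : ℕ) : ℂ)) * Complex.exp (2 * Real.pi * Complex.I * a * (n : ℕ)))
      + v1 * (starRingEnd ℂ) ((1 / ((n : ℕ) : ℂ)) * Complex.exp (2 * Real.pi * Complex.I * b * (n : ℕ))) with hxdef
  have h1 : (‖x‖ : ℝ) ^ 2 = (x * (starRingEnd ℂ) x).re := by
    rw [Complex.mul_conj]
    simp only [Complex.ofReal_re]
    rw [Complex.normSq_eq_norm_sq]
  rw [h1]
  set z := v0 * (starRingEnd ℂ) v1 *
      (Complex.exp (2 * Real.pi * Complex.I * ((b : ℂ) - (a : ℂ)) * (n : ℕ)) / ((n : ℕ) : ℂ) ^ 2) with hzdef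
  have hprod : x * (starRingEnd ℂ) x =
      (((‖v0‖ ^ 2 + ‖v1‖ ^ 2) * (1 / ((n : ℕ) : ℝ) ^ 2) : ℝ) : ℂ) + (z + (starRingEnd ℂ) z) := by
    have hv0 : v0 * (starRingEnd ℂ) v0 = ((‖v0‖ ^ 2 : ℝ) : ℂ) := by
      rw [Complex.mul_conj]; norm_cast
      rw [Complex.normSq_eq_norm_sq]
    have hv1 : v1 * (starRingEnd ℂ) v1 = ((‖v1‖ ^ 2 : ℝ) : ℂ) := by
      rw [Complex.mul_conj]; norm_cast
      rw [Complex.normSq_eq_norm_sq]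
    have hE : Complex.exp (2 * Real.pi * Complex.I * ((b : ℂ) - (a : ℂ)) * (n : ℕ)) =
        (starRingEnd ℂ) (Complex.exp (2 * Real.pi * Complex.I * a * (n : ℕ)))
          * Complex.exp (2 * Real.pi * Complex.I * b * (n : ℕ)) := by
      rw [conj_exp_aux _ (by simp) n, ← Complex.exp_add]
      congr 1
      ring
    have hEc : (starRingEnd ℂ) (Complex.exp (2 * Real.pi * Complex.I * ((b : ℂ) - (a : ℂ)) * (n : ℕ))) =
        Complex.exp (2 * Real.pi * Complex.I * a * (n : ℕ))
          * (starRingEnd ℂ) (Complex.exp (2 * Real.pi * Complex.I * b * (n : ℕ))) := by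
      rw [conj_exp_aux _ (by simp) n, conj_exp_aux _ (by simp) n, ← Complex.exp_add]
      congr 1
      ring
    have hu : (starRingEnd ℂ) (Complex.exp (2 * Real.pi * Complex.I * a * (n : ℕ)))
        * Complex.exp (2 * Real.pi * Complex.I * a * (n : ℕ)) = 1 := by
      rw [conj_exp_aux _ (by simp) n, ← Complex.exp_add]
      simp
    have he : (starRingEnd ℂ) (Complex.exp (2 * Real.pi * Complex.I * b * (n : ℕ)))
        * Complex.exp (2 * Real.pi * Complex.I * b * (n : ℕ)) = 1 := by
      rw [conj_exp_aux _ (by simp) n, ← Complex.exp_add]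
      simp
    rw [hxdef, hzdef]
    simp only [map_add, map_mul, map_div₀, map_pow, map_natCast, map_one, map_ofNat,
      Complex.conj_conj, hEc]
    rw [hE]
    push_cast at hv0 hv1 ⊢
    linear_combination (v0 * (starRingEnd ℂ) v0 / ((n : ℕ) : ℂ) ^ 2) * hu
      + (1 / ((n : ℕ) : ℂ) ^ 2) * hv0
      + (v1 * (starRingEnd ℂ) v1 / ((n : ℕ) : ℂ) ^ 2) * he
      + (1 / ((n : ℕ) : ℂ) ^ 2) * hv1
  rw [hprod]
  have h2 : (z + (starRingEnd ℂ) z) = ((2 * z.re : ℝ) : ℂ) := by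
    rw [Complex.add_conj]
  rw [h2, ← Complex.ofReal_add, Complex.ofReal_re]

private noncomputable def tt (a b : ℝ) (n : ℕ+) : ℂ :=
  Complex.exp (2 * Real.pi * Complex.I * ((b : ℂ) - (a : ℂ)) * (n : ℕ)) / ((n : ℕ) : ℂ) ^ 2

private lemma norm_tt (a b : ℝ) (n : ℕ+) : ‖tt a b n‖ = 1 / ((n : ℕ) : ℝ) ^ 2 := by
  have hn : ((n : ℕ) : ℝ) ≠ 0 := Nat.cast_ne_zero.mpr n.pos.ne'
  unfold tt
  have harg : (2 * Real.pi * Complex.I * ((b : ℂ) - (a : ℂ)) * ((n : ℕ) : ℂ))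
      = ((2 * Real.pi * (b - a) * (n : ℕ) : ℝ) : ℂ) * Complex.I := by
    push_cast; ring
  rw [norm_div, norm_pow, harg]
  rw [Complex.norm_exp_ofReal_mul_I]
  simp

theorem stmt13 (a b : ℝ) (h : ∀ m : ℤ, a - b ≠ (m : ℝ)) :
    ∃ A B : ℝ, 0 < A ∧ 0 < B ∧ ∀ v : Fin 2 → ℂ,
      A * (‖v 0‖ ^ 2 + ‖v 1‖ ^ 2) ≤
        (∑' n : ℕ+,
          ‖v 0 * (starRingEnd ℂ) ((1 / ((n : ℕ) : ℂ)) * Complex.exp (2 * Real.pi * Complex.I * a * (n : ℕ)))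
            + v 1 * (starRingEnd ℂ) ((1 / ((n : ℕ) : ℂ)) * Complex.exp (2 * Real.pi * Complex.I * b * (n : ℕ)))‖ ^ 2) ∧
      (∑' n : ℕ+,
          ‖v 0 * (starRingEnd ℂ) ((1 / ((n : ℕ) : ℂ)) * Complex.exp (2 * Real.pi * Complex.I * a * (n : ℕ)))
            + v 1 * (starRingEnd ℂ) ((1 / ((n : ℕ) : ℂ)) * Complex.exp (2 * Real.pi * Complex.I * b * (n : ℕ)))‖ ^ 2)
        ≤ B * (‖v 0‖ ^ 2 + ‖v 1‖ ^ 2) := by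
  classical
  have hs0 : Summable (fun n : ℕ => 1 / (n : ℝ) ^ 2) :=
    Real.summable_one_div_nat_pow.mpr one_lt_two
  have hs : Summable (fun n : ℕ+ => 1 / ((n : ℕ) : ℝ) ^ 2) :=
    hs0.comp_injective PNat.coe_injective
  have ht : Summable (tt a b) := by
    apply Summable.of_norm
    simpa only [norm_tt] using hs
  set S : ℝ := ∑' n : ℕ+, 1 / ((n : ℕ) : ℝ) ^ 2 with hSdef
  set T : ℂ := ∑' n : ℕ+, tt a b n with hTdef
  have hSpos : 0 < S :=
    Summable.tsum_pos hs (fun n => by positivity) 1 (by norm_num)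
  -- strict inequality ‖T‖ < S
  have hE1ne : Complex.exp (2 * Real.pi * Complex.I * ((b : ℂ) - (a : ℂ)) * (((1:ℕ+) : ℕ) : ℂ)) ≠ 1 := by
    intro heq1
    rw [Complex.exp_eq_one_iff] at heq1
    obtain ⟨m, hm⟩ := heq1
    apply h (-m)
    have h2ne : (2 * (Real.pi : ℂ) * Complex.I) ≠ 0 := by
      simp [Real.pi_ne_zero, Complex.I_ne_zero]
    have h2 : (2 * (Real.pi : ℂ) * Complex.I) * ((b : ℂ) - a) =
        (2 * (Real.pi : ℂ) * Complex.I) * m := by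
      have h1 : (((1:ℕ+) : ℕ) : ℂ) = 1 := by norm_num
      rw [h1] at hm
      linear_combination hm
    have h3 : ((b : ℂ) - a) = (m : ℂ) := mul_left_cancel₀ h2ne h2
    have h4 : b - a = (m : ℝ) := by exact_mod_cast h3
    push_cast
    linarith
  have h12 : ‖tt a b 1 + tt a b 2‖ < ‖tt a b 1‖ + ‖tt a b 2‖ := by
    rcases lt_or_eq_of_le (norm_add_le (tt a b 1) (tt a b 2)) with hlt | heq
    · exact hlt
    · exfalso
      have hsr : SameRay ℝ (tt a b 1) (tt a b 2) := sameRay_iff_norm_add.mpr heq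
      have h1ne : tt a b 1 ≠ 0 := by
        unfold tt
        simp [Complex.exp_ne_zero]
      obtain ⟨r, hr0, hr⟩ := hsr.exists_nonneg_left h1ne
      have hnr : r * ‖tt a b 1‖ = ‖tt a b 2‖ := by
        rw [← hr]; simp [norm_smul, _root_.abs_of_nonneg hr0]
      rw [norm_tt, norm_tt] at hnr
      have hr4 : r = 1 / 4 := by
        norm_num at hnr
        linarith
      rw [hr4] at hr
      unfold tt at hr
      have hE2 : Complex.exp (2 * Real.pi * Complex.I * ((b : ℂ) - (a : ℂ)) * (((2:ℕ+) : ℕ) : ℂ))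
          = Complex.exp (2 * Real.pi * Complex.I * ((b : ℂ) - (a : ℂ)) * (((1:ℕ+) : ℕ) : ℂ)) ^ 2 := by
        rw [sq, ← Complex.exp_add]
        congr 1
        norm_num
        ring
      rw [hE2] at hr
      set E := Complex.exp (2 * Real.pi * Complex.I * ((b : ℂ) - (a : ℂ)) * (((1:ℕ+) : ℕ) : ℂ)) with hEdef
      have hEne : E ≠ 0 := Complex.exp_ne_zero _
      apply hE1ne
      have h14 : (((1:ℕ+) : ℕ) : ℂ) = 1 := by norm_num
      have h24 : (((2:ℕ+) : ℕ) : ℂ) = 2 := by norm_num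
      rw [h14, h24, Complex.real_smul] at hr
      push_cast at hr
      have hEeq : E * E = E * 1 := by linear_combination -4 * hr
      exact mul_left_cancel₀ hEne hEeq
  -- decompositions
  set g : ℕ+ → ℂ := fun n => if n = 1 then 0 else tt a b n with hgdef
  have hg : Summable g := by
    apply Summable.of_norm
    apply Summable.of_nonneg_of_le (fun n => norm_nonneg _) _ hs
    intro n
    by_cases hn1 : n = 1
    · simp [hgdef, hn1]
    · simp only [hgdef, if_neg hn1, norm_tt]
      exact le_rfl
  set g2 : ℕ+ → ℂ := fun n => if n = 2 then 0 else g n with hg2def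
  have hg2norm : ∀ n : ℕ+,
      ‖g2 n‖ = (if n = 2 then (0:ℝ) else if n = 1 then 0 else 1 / ((n:ℕ):ℝ)^2) := by
    intro n
    by_cases h2 : n = 2
    · simp [hg2def, h2, hgdef]
    · by_cases h1 : n = 1
      · simp [hg2def, hgdef, h2, h1]
      · simp only [hg2def, hgdef, if_neg h2, if_neg h1, norm_tt]
  have hsg2R : Summable (fun n : ℕ+ => if n = 2 then (0:ℝ) else if n = 1 then 0 else 1 / ((n:ℕ):ℝ)^2) := by
    apply Summable.of_nonneg_of_le _ _ hs
    · intro n; split_ifs <;> positivity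
    · intro n; split_ifs <;> first | positivity | exact le_rfl
  have hg2 : Summable (fun n : ℕ+ => ‖g2 n‖) := by
    apply Summable.of_nonneg_of_le (fun n => norm_nonneg _) _ hsg2R
    intro n; rw [hg2norm n]
  have hTdec : T = tt a b 1 + (tt a b 2 + ∑' n : ℕ+, g2 n) := by
    rw [hTdef, Summable.tsum_eq_add_tsum_ite ht 1]
    congr 1
    have : (fun n : ℕ+ => if n = 1 then 0 else tt a b n) = g := rfl
    rw [this, Summable.tsum_eq_add_tsum_ite hg 2]
    congr 1
  have hsgR : Summable (fun n : ℕ+ => if n = 1 then (0:ℝ) else 1 / ((n:ℕ):ℝ)^2) := by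
    apply Summable.of_nonneg_of_le _ _ hs
    · intro n; split_ifs <;> positivity
    · intro n; split_ifs <;> first | positivity | exact le_rfl
  have hSdec : S = 1 + (1/4 + ∑' n : ℕ+,
      (if n = 2 then (0:ℝ) else if n = 1 then 0 else 1 / ((n:ℕ):ℝ)^2)) := by
    rw [hSdef, Summable.tsum_eq_add_tsum_ite hs 1, Summable.tsum_eq_add_tsum_ite hsgR 2]
    norm_num
  have hTS : ‖T‖ < S := by
    have hnormsum : ‖∑' n : ℕ+, g2 n‖ ≤ ∑' n : ℕ+,
        (if n = 2 then (0:ℝ) else if n = 1 then 0 else 1 / ((n:ℕ):ℝ)^2) := by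
      calc ‖∑' n : ℕ+, g2 n‖ ≤ ∑' n : ℕ+, ‖g2 n‖ := norm_tsum_le_tsum_norm hg2
      _ = _ := tsum_congr hg2norm
    have ht1 : ‖tt a b 1‖ = 1 := by rw [norm_tt]; norm_num
    have ht2 : ‖tt a b 2‖ = 1/4 := by rw [norm_tt]; norm_num
    calc ‖T‖ ≤ ‖tt a b 1 + tt a b 2‖ + ‖∑' n : ℕ+, g2 n‖ := by
          rw [hTdec, ← add_assoc]; exact norm_add_le _ _
    _ < (‖tt a b 1‖ + ‖tt a b 2‖) + ∑' n : ℕ+,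
          (if n = 2 then (0:ℝ) else if n = 1 then 0 else 1 / ((n:ℕ):ℝ)^2) :=
        add_lt_add_of_lt_of_le h12 hnormsum
    _ = S := by rw [ht1, ht2, hSdec]; ring
  refine ⟨S - ‖T‖, S + ‖T‖, by linarith, by positivity, fun v => ?_⟩
  set v0 := v 0 with hv0def
  set v1 := v 1 with hv1def
  set w := v0 * (starRingEnd ℂ) v1 with hwdef
  set N := ‖v0‖^2 + ‖v1‖^2 with hNdef
  have htw : Summable (fun n : ℕ+ => w * tt a b n) := ht.mul_left w
  have htre : Summable (fun n : ℕ+ => (w * tt a b n).re) :=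
    htw.map Complex.reCLM Complex.reCLM.continuous
  have hsum1 : Summable (fun n : ℕ+ => N * (1 / ((n:ℕ):ℝ)^2)) := hs.mul_left N
  have hsum2 : Summable (fun n : ℕ+ => 2 * (w * tt a b n).re) := htre.mul_left 2
  have e0 : ∀ n : ℕ+,
      ‖v0 * (starRingEnd ℂ) ((1 / ((n : ℕ) : ℂ)) * Complex.exp (2 * Real.pi * Complex.I * a * (n : ℕ)))
        + v1 * (starRingEnd ℂ) ((1 / ((n : ℕ) : ℂ)) * Complex.exp (2 * Real.pi * Complex.I * b * (n : ℕ)))‖ ^ 2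
      = N * (1 / ((n:ℕ):ℝ)^2) + 2 * (w * tt a b n).re := fun n => term_eq a b v0 v1 n
  have htot : (∑' n : ℕ+,
      ‖v0 * (starRingEnd ℂ) ((1 / ((n : ℕ) : ℂ)) * Complex.exp (2 * Real.pi * Complex.I * a * (n : ℕ)))
        + v1 * (starRingEnd ℂ) ((1 / ((n : ℕ) : ℂ)) * Complex.exp (2 * Real.pi * Complex.I * b * (n : ℕ)))‖ ^ 2)
      = N * S + 2 * (w * T).re := by
    rw [tsum_congr e0, Summable.tsum_add hsum1 hsum2, tsum_mul_left, tsum_mul_left]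
    congr 1
    rw [← Complex.re_tsum htw, tsum_mul_left]
  have hre1 : |(w * T).re| ≤ ‖v0‖ * ‖v1‖ * ‖T‖ := by
    calc |(w * T).re| ≤ ‖w * T‖ := Complex.abs_re_le_norm _
    _ = ‖w‖ * ‖T‖ := by rw [norm_mul]
    _ = ‖v0‖ * ‖v1‖ * ‖T‖ := by rw [hwdef, norm_mul, RCLike.norm_conj]
  have h2ab : 2 * (‖v0‖ * ‖v1‖) ≤ N := by
    rw [hNdef]; nlinarith [sq_nonneg (‖v0‖ - ‖v1‖)]
  have habs := abs_le.mp hre1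
  have hmul : 2 * (‖v0‖ * ‖v1‖) * ‖T‖ ≤ N * ‖T‖ :=
    mul_le_mul_of_nonneg_right h2ab (norm_nonneg T)
  constructor
  · rw [htot]
    nlinarith [habs.1, hmul]
  · rw [htot]
    nlinarith [habs.2, hmul]
end

section
/- Let (X, Σ, μ) be a measure space. The set of continuous frames ℱ = {u ∈ L²(X, μ; 𝔽ⁿ) : ∃ A, B > 0, ∀v ∈ 𝔽ⁿ, A‖v‖² ≤ ∫_X |⟨v,u_x⟩|² dμ ≤ B‖v‖²} is open in L²(X, μ; 𝔽ⁿ). -/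
open MeasureTheory RCLike

private lemma l2_integral_norm_sq {𝕜 X : Type*} [RCLike 𝕜] [MeasurableSpace X]
    {μ : Measure X} (f : Lp 𝕜 2 μ) : ∫ x, ‖f x‖ ^ 2 ∂μ = ‖f‖ ^ 2 := by
  have h1 : (inner 𝕜 f f : 𝕜) = ∫ x, (inner 𝕜 (f x) (f x) : 𝕜) ∂μ :=
    MeasureTheory.L2.inner_def f f
  have h2 : ∫ x, (inner 𝕜 (f x) (f x) : 𝕜) ∂μ = ((∫ x, ‖f x‖ ^ 2 ∂μ : ℝ) : 𝕜) := by
    rw [← integral_ofReal]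
    refine integral_congr_ae (Filter.Eventually.of_forall fun x => ?_)
    simp only [inner_self_eq_norm_sq_to_K]
    push_cast
    ring
  have h3 : ‖f‖ ^ 2 = re (inner 𝕜 f f : 𝕜) := InnerProductSpace.norm_sq_eq_re_inner f
  rw [h3, h1, h2, ofReal_re]

theorem stmt14 {𝕜 X : Type*} [RCLike 𝕜] [MeasurableSpace X] (μ : Measure X) (n : ℕ) :
    IsOpen {u : Lp (EuclideanSpace 𝕜 (Fin n)) 2 μ |
      ∃ A B : ℝ, 0 < A ∧ 0 < B ∧ ∀ v : EuclideanSpace 𝕜 (Fin n),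
        A * ‖v‖ ^ 2 ≤ ∫ x, ‖(inner 𝕜 v (u x) : 𝕜)‖ ^ 2 ∂μ ∧
        ∫ x, ‖(inner 𝕜 v (u x) : 𝕜)‖ ^ 2 ∂μ ≤ B * ‖v‖ ^ 2} := by
  -- the key operator
  set T : EuclideanSpace 𝕜 (Fin n) → Lp (EuclideanSpace 𝕜 (Fin n)) 2 μ →L[𝕜] Lp 𝕜 2 μ :=
    fun v => (innerSL 𝕜 v).compLpL 2 μ with hT
  have hQ : ∀ (u : Lp (EuclideanSpace 𝕜 (Fin n)) 2 μ) (v : EuclideanSpace 𝕜 (Fin n)),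
      ∫ x, ‖(inner 𝕜 v (u x) : 𝕜)‖ ^ 2 ∂μ = ‖T v u‖ ^ 2 := by
    intro u v
    rw [← l2_integral_norm_sq (T v u)]
    refine integral_congr_ae ?_
    filter_upwards [ContinuousLinearMap.coeFn_compLpL (innerSL 𝕜 v) u] with x hx
    rw [hx]
    rfl
  have hTnorm : ∀ (v : EuclideanSpace 𝕜 (Fin n)) (w : Lp (EuclideanSpace 𝕜 (Fin n)) 2 μ),
      ‖T v w‖ ≤ ‖v‖ * ‖w‖ := by
    intro v w
    calc ‖T v w‖ ≤ ‖T v‖ * ‖w‖ := (T v).le_opNorm w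
      _ ≤ ‖v‖ * ‖w‖ := by
          refine mul_le_mul_of_nonneg_right ?_ (norm_nonneg w)
          calc ‖T v‖ ≤ ‖innerSL 𝕜 v‖ := ContinuousLinearMap.norm_compLpL_le (innerSL 𝕜 v)
            _ = ‖v‖ := innerSL_apply_norm 𝕜 v
  rw [Metric.isOpen_iff]
  rintro u ⟨A, B, hA, hB, hAB⟩
  refine ⟨Real.sqrt A / 2, by positivity, fun u' hu' => ?_⟩
  rw [Metric.mem_ball, dist_eq_norm] at hu'
  refine ⟨A / 4, ‖u'‖ ^ 2 + 1, by positivity, by positivity, fun v => ?_⟩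
  constructor
  · -- lower bound
    rw [hQ]
    have h1 : Real.sqrt A * ‖v‖ ≤ ‖T v u‖ := by
      have hv := (hAB v).1
      rw [hQ] at hv
      have h2 : (Real.sqrt A * ‖v‖) ^ 2 ≤ ‖T v u‖ ^ 2 := by
        rw [mul_pow, Real.sq_sqrt hA.le]; exact hv
      have := Real.sqrt_le_sqrt h2
      rwa [Real.sqrt_sq (by positivity), Real.sqrt_sq (norm_nonneg _)] at this
    have hsub : ‖T v u - T v u'‖ ≤ ‖v‖ * ‖u - u'‖ := by
      rw [← map_sub]; exact hTnorm v _
    have htri := norm_sub_norm_le (T v u) (T v u')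
    have hrev : ‖u - u'‖ < Real.sqrt A / 2 := by rwa [norm_sub_rev] at hu'
    have key : Real.sqrt A / 2 * ‖v‖ ≤ ‖T v u'‖ := by
      nlinarith [norm_nonneg v, Real.sqrt_nonneg A, norm_nonneg (u - u')]
    have hfin : (Real.sqrt A / 2 * ‖v‖) ^ 2 ≤ ‖T v u'‖ ^ 2 :=
      pow_le_pow_left₀ (by positivity) key 2
    calc A / 4 * ‖v‖ ^ 2 = (Real.sqrt A / 2 * ‖v‖) ^ 2 := by
          rw [mul_pow, div_pow, Real.sq_sqrt hA.le]; ring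
      _ ≤ ‖T v u'‖ ^ 2 := hfin
  · -- upper bound
    rw [hQ]
    calc ‖T v u'‖ ^ 2 ≤ (‖v‖ * ‖u'‖) ^ 2 :=
          pow_le_pow_left₀ (norm_nonneg _) (hTnorm v u') 2
      _ = ‖u'‖ ^ 2 * ‖v‖ ^ 2 := by ring
      _ ≤ (‖u'‖ ^ 2 + 1) * ‖v‖ ^ 2 :=
          mul_le_mul_of_nonneg_right (le_add_of_nonneg_right zero_le_one) (sq_nonneg _)
end

section
/- Let (X, Σ, μ) be a measure space with dim L²(X, μ; 𝔽) ≥ n. Then the set of continuous frames in L²(X, μ; 𝔽ⁿ) is nonempty and dense in L²(X, μ; 𝔽ⁿ). -/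
open MeasureTheory

section Gram
variable {𝕜 H : Type*} [RCLike 𝕜] [NormedAddCommGroup H] [InnerProductSpace 𝕜 H]

local notation "⟪" x ", " y "⟫" => @inner 𝕜 _ _ x y

/-- Gram matrix of a tuple. -/
noncomputable def stmt15Gram {n : ℕ} (f : Fin n → H) : Matrix (Fin n) (Fin n) 𝕜 :=
  Matrix.of fun i j => ⟪f i, f j⟫

lemma stmt15Gram_mulVec {n : ℕ} (f : Fin n → H) (c : Fin n → 𝕜) (i : Fin n) :
    (stmt15Gram (𝕜 := 𝕜) f).mulVec c i = ⟪f i, ∑ j, c j • f j⟫ := by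
  simp [stmt15Gram, Matrix.mulVec, dotProduct, inner_sum, inner_smul_right, mul_comm]

lemma stmt15_linearIndependent_iff_gram {n : ℕ} (f : Fin n → H) :
    LinearIndependent 𝕜 f ↔ (stmt15Gram (𝕜 := 𝕜) f).det ≠ 0 := by
  rw [Fintype.linearIndependent_iff]
  constructor
  · intro h hdet
    obtain ⟨c, hc0, hc⟩ := (Matrix.exists_mulVec_eq_zero_iff).2 hdet
    refine hc0 (funext fun i => h c ?_ i)
    have hw : ∀ i, ⟪f i, ∑ j, c j • f j⟫ = 0 := by
      intro i; rw [← stmt15Gram_mulVec, hc]; rfl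
    have : ⟪(∑ j, c j • f j : H), ∑ j, c j • f j⟫ = 0 := by
      rw [sum_inner]
      exact Finset.sum_eq_zero fun i _ => by rw [inner_smul_left, hw i, mul_zero]
    exact inner_self_eq_zero.1 this
  · intro hdet c hc
    by_contra hne
    refine hdet ((Matrix.exists_mulVec_eq_zero_iff).1 ?_)
    refine ⟨c, fun h => hne (fun i => congrFun h i), ?_⟩
    funext i
    rw [stmt15Gram_mulVec, hc, inner_zero_right]; rfl

open Polynomial in
lemma stmt15_exists_small_perturb {n : ℕ} (a f : Fin n → H) (ha : LinearIndependent 𝕜 a)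
    {δ : ℝ} (hδ : 0 < δ) :
    ∃ t : ℝ, |t| < δ ∧ LinearIndependent 𝕜 (fun i => f i + ((t : 𝕜)) • (a i - f i)) := by
  set d : Fin n → H := fun i => a i - f i with hd
  set M : Matrix (Fin n) (Fin n) (Polynomial 𝕜) := Matrix.of fun i j =>
    C ⟪f i, f j⟫ + C (⟪f i, d j⟫ + ⟪d i, f j⟫) * X + C ⟪d i, d j⟫ * X ^ 2 with hM
  set p : Polynomial 𝕜 := M.det with hp
  have keyeval : ∀ t : ℝ, p.eval ((t : 𝕜)) =
      (stmt15Gram (𝕜 := 𝕜) (fun i => f i + ((t : 𝕜)) • d i)).det := by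
    intro t
    have h1 : p.eval ((t : 𝕜)) = (evalRingHom ((t:𝕜))) M.det := rfl
    rw [h1, RingHom.map_det]
    congr 1
    ext i j
    simp only [RingHom.mapMatrix_apply, Matrix.map_apply, hM, Matrix.of_apply, stmt15Gram,
      coe_evalRingHom, eval_add, eval_mul, eval_C, eval_X, eval_pow]
    rw [inner_add_left, inner_add_right, inner_add_right, inner_smul_left, inner_smul_right,
      inner_smul_left, inner_smul_right, RCLike.conj_ofReal]
    ring
  have hp1 : p.eval (1 : 𝕜) ≠ 0 := by
    have := keyeval 1
    push_cast at this
    rw [this]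
    have : (fun i => f i + (1 : 𝕜) • d i) = a := by
      funext i; simp [hd]
    rw [this]
    exact (stmt15_linearIndependent_iff_gram a).1 ha
  have hpne : p ≠ 0 := fun h => hp1 (by simp [h])
  have hfin : ({x : 𝕜 | p.IsRoot x}).Finite := p.finite_setOf_isRoot hpne
  have hfin2 : ({t : ℝ | p.eval ((t:𝕜)) = 0}).Finite := by
    have : {t : ℝ | p.eval ((t:𝕜)) = 0} ⊆ ((↑) : ℝ → 𝕜) ⁻¹' {x : 𝕜 | p.IsRoot x} := fun t ht => ht
    exact (hfin.preimage (RCLike.ofReal_injective.injOn)).subset this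
  have hinf : (Set.Ioo (0:ℝ) δ).Infinite := Set.Ioo_infinite hδ
  obtain ⟨t, htmem, htroot⟩ := (hinf.diff hfin2).nonempty
  refine ⟨t, ?_, ?_⟩
  · rw [abs_lt]; exact ⟨lt_trans (neg_neg_iff_pos.2 hδ) htmem.1, htmem.2⟩
  · rw [stmt15_linearIndependent_iff_gram, ← keyeval]
    exact htroot

end Gram

section LpStuff
variable {𝕜 X : Type*} [RCLike 𝕜] [MeasurableSpace X]

local notation "⟪" x ", " y "⟫" => @inner 𝕜 _ _ x y

/-- `i`-th component of an `Lp` function with values in `EuclideanSpace`. -/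
noncomputable def stmt15Comp (μ : Measure X) (n : ℕ) (i : Fin n) :
    Lp (EuclideanSpace 𝕜 (Fin n)) 2 μ →L[𝕜] Lp 𝕜 2 μ :=
  (EuclideanSpace.proj i).compLpL 2 μ

/-- embedding of a scalar `Lp` function as the `i`-th coordinate. -/
noncomputable def stmt15Emb (μ : Measure X) (n : ℕ) (i : Fin n) :
    Lp 𝕜 2 μ →L[𝕜] Lp (EuclideanSpace 𝕜 (Fin n)) 2 μ :=
  ((ContinuousLinearMap.id 𝕜 𝕜).smulRight (EuclideanSpace.single i (1:𝕜))).compLpL 2 μ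

lemma stmt15Comp_ae (μ : Measure X) {n : ℕ} (i : Fin n)
    (u : Lp (EuclideanSpace 𝕜 (Fin n)) 2 μ) :
    stmt15Comp μ n i u =ᵐ[μ] fun x => u x i := by
  filter_upwards [ContinuousLinearMap.coeFn_compLpL (EuclideanSpace.proj (𝕜 := 𝕜) i) u]
    with x hx
  exact hx

lemma stmt15Comp_emb (μ : Measure X) {n : ℕ} (i j : Fin n) (h : Lp 𝕜 2 μ) :
    stmt15Comp μ n j (stmt15Emb μ n i h) = if j = i then h else 0 := by
  apply Lp.ext
  have h1 : (stmt15Emb μ n i h : X → EuclideanSpace 𝕜 (Fin n)) =ᵐ[μ]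
      fun x => (h x : 𝕜) • EuclideanSpace.single i (1:𝕜) := by
    filter_upwards [ContinuousLinearMap.coeFn_compLpL (μ := μ) (p := 2)
      ((ContinuousLinearMap.id 𝕜 𝕜).smulRight (EuclideanSpace.single i (1:𝕜))) h] with x hx
    exact hx
  have h2 := stmt15Comp_ae (𝕜 := 𝕜) μ j (stmt15Emb μ n i h)
  by_cases hij : j = i
  · subst hij
    simp only [if_pos rfl]
    filter_upwards [h1, h2] with x hx1 hx2
    rw [hx2, hx1]
    simp [EuclideanSpace.single_apply]
  · simp only [if_neg hij]
    filter_upwards [h1, h2, Lp.coeFn_zero 𝕜 2 μ] with x hx1 hx2 hx0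
    rw [hx2, hx1, hx0]
    simp [EuclideanSpace.single_apply, hij]

lemma stmt15Comp_sum (μ : Measure X) {n : ℕ} (g : Fin n → Lp 𝕜 2 μ) (j : Fin n) :
    stmt15Comp μ n j (∑ i, stmt15Emb μ n i (g i)) = g j := by
  rw [map_sum]
  simp_rw [stmt15Comp_emb]
  simp

lemma stmt15_coeFn_sum {E : Type*} [NormedAddCommGroup E] (μ : Measure X) {ι : Type*}
    (s : Finset ι) (f : ι → Lp E 2 μ) :
    (↑↑(∑ i ∈ s, f i) : X → E) =ᵐ[μ] fun x => ∑ i ∈ s, f i x := by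
  classical
  induction s using Finset.induction with
  | empty => simp only [Finset.sum_empty]; exact Lp.coeFn_zero E 2 μ
  | insert _ _ hnotmem ih =>
    rw [Finset.sum_insert hnotmem]
    filter_upwards [Lp.coeFn_add _ (∑ i ∈ _, f i), ih] with x hx1 hx2
    rw [hx1]
    simp only [Pi.add_apply, hx2]
    rw [Finset.sum_insert hnotmem]

noncomputable def stmt15T (μ : Measure X) (n : ℕ) (u : Lp (EuclideanSpace 𝕜 (Fin n)) 2 μ)
    (v : EuclideanSpace 𝕜 (Fin n)) : Lp 𝕜 2 μ :=
  (innerSL 𝕜 v).compLp u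

lemma stmt15T_ae (μ : Measure X) {n : ℕ} (u : Lp (EuclideanSpace 𝕜 (Fin n)) 2 μ)
    (v : EuclideanSpace 𝕜 (Fin n)) :
    (stmt15T μ n u v : X → 𝕜) =ᵐ[μ] fun x => ⟪v, u x⟫ := by
  filter_upwards [ContinuousLinearMap.coeFn_compLp' (innerSL 𝕜 v) u] with x hx
  exact hx

lemma stmt15T_integral (μ : Measure X) {n : ℕ} (u : Lp (EuclideanSpace 𝕜 (Fin n)) 2 μ)
    (v : EuclideanSpace 𝕜 (Fin n)) :
    ∫ x, ‖(⟪v, u x⟫ : 𝕜)‖ ^ 2 ∂μ = ‖stmt15T μ n u v‖ ^ 2 := by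
  set g := stmt15T μ n u v with hgdef
  calc ∫ x, ‖(⟪v, u x⟫ : 𝕜)‖ ^ 2 ∂μ = ∫ x, ‖g x‖ ^ 2 ∂μ := by
        refine integral_congr_ae ?_
        filter_upwards [stmt15T_ae μ u v] with x hx
        rw [hx]
    _ = ∫ x, RCLike.re (⟪g x, g x⟫ : 𝕜) ∂μ := by
        refine integral_congr_ae (Filter.Eventually.of_forall fun x => ?_)
        exact (inner_self_eq_norm_sq (𝕜 := 𝕜) _).symm
    _ = RCLike.re (∫ x, (⟪g x, g x⟫ : 𝕜) ∂μ) := integral_re (L2.integrable_inner g g)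
    _ = RCLike.re (⟪g, g⟫ : 𝕜) := by rw [L2.inner_def]
    _ = ‖g‖ ^ 2 := inner_self_eq_norm_sq (𝕜 := 𝕜) g

lemma stmt15T_eq_sum (μ : Measure X) {n : ℕ} (u : Lp (EuclideanSpace 𝕜 (Fin n)) 2 μ)
    (v : EuclideanSpace 𝕜 (Fin n)) :
    stmt15T μ n u v = ∑ i, (starRingEnd 𝕜) (v i) • stmt15Comp μ n i u := by
  apply Lp.ext
  have hall : ∀ᵐ x ∂μ, ∀ i : Fin n,
      (((starRingEnd 𝕜) (v i) • stmt15Comp μ n i u : Lp 𝕜 2 μ) : X → 𝕜) x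
        = (starRingEnd 𝕜) (v i) * u x i := by
    rw [MeasureTheory.ae_all_iff]
    intro i
    filter_upwards [Lp.coeFn_smul ((starRingEnd 𝕜) (v i)) (stmt15Comp μ n i u),
      stmt15Comp_ae μ i u] with x h1 h2
    rw [h1]
    simp only [Pi.smul_apply, h2, smul_eq_mul]
  filter_upwards [stmt15T_ae μ u v,
    stmt15_coeFn_sum μ Finset.univ (fun i => (starRingEnd 𝕜) (v i) • stmt15Comp μ n i u),
    hall] with x h1 h2 h3
  rw [h1, h2]
  simp only [h3]
  rw [PiLp.inner_apply]
  simp [RCLike.inner_apply, mul_comm]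

lemma stmt15T_sub (μ : Measure X) {n : ℕ} (u : Lp (EuclideanSpace 𝕜 (Fin n)) 2 μ)
    (v w : EuclideanSpace 𝕜 (Fin n)) :
    stmt15T μ n u (v - w) = stmt15T μ n u v - stmt15T μ n u w := by
  apply Lp.ext
  filter_upwards [stmt15T_ae μ u (v - w), stmt15T_ae μ u v, stmt15T_ae μ u w,
    Lp.coeFn_sub (stmt15T μ n u v) (stmt15T μ n u w)] with x h1 h2 h3 h4
  rw [h1, h4]
  simp [h2, h3, inner_sub_left]

lemma stmt15T_smul (μ : Measure X) {n : ℕ} (u : Lp (EuclideanSpace 𝕜 (Fin n)) 2 μ)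
    (c : 𝕜) (v : EuclideanSpace 𝕜 (Fin n)) :
    stmt15T μ n u (c • v) = (starRingEnd 𝕜) c • stmt15T μ n u v := by
  apply Lp.ext
  filter_upwards [stmt15T_ae μ u (c • v), stmt15T_ae μ u v,
    Lp.coeFn_smul ((starRingEnd 𝕜) c) (stmt15T μ n u v)] with x h1 h2 h3
  rw [h1, h3]
  simp [h2, inner_smul_left]

lemma stmt15T_zero (μ : Measure X) {n : ℕ} (u : Lp (EuclideanSpace 𝕜 (Fin n)) 2 μ) :
    stmt15T μ n u 0 = 0 := by
  apply Lp.ext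
  filter_upwards [stmt15T_ae μ u 0, Lp.coeFn_zero 𝕜 2 μ] with x h1 h2
  rw [h1, h2]
  simp

lemma stmt15T_norm_le (μ : Measure X) {n : ℕ} (u : Lp (EuclideanSpace 𝕜 (Fin n)) 2 μ)
    (v : EuclideanSpace 𝕜 (Fin n)) : ‖stmt15T μ n u v‖ ≤ ‖v‖ * ‖u‖ := by
  simpa [stmt15T, innerSL_apply_norm] using ContinuousLinearMap.norm_compLp_le (innerSL 𝕜 v) u

lemma stmt15_mem_of_indep (μ : Measure X) {n : ℕ} (u : Lp (EuclideanSpace 𝕜 (Fin n)) 2 μ)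
    (hu : LinearIndependent 𝕜 fun i => stmt15Comp μ n i u) :
    ∃ A B : ℝ, 0 < A ∧ 0 < B ∧ ∀ v : EuclideanSpace 𝕜 (Fin n),
      A * ‖v‖ ^ 2 ≤ ∫ x, ‖(⟪v, u x⟫ : 𝕜)‖ ^ 2 ∂μ ∧
      ∫ x, ‖(⟪v, u x⟫ : 𝕜)‖ ^ 2 ∂μ ≤ B * ‖v‖ ^ 2 := by
  rcases Nat.eq_zero_or_pos n with rfl | hn
  · refine ⟨1, 1, one_pos, one_pos, fun v => ?_⟩
    have hv : ∀ x : X, (⟪v, u x⟫ : 𝕜) = 0 := fun x => by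
      rw [PiLp.inner_apply]; simp
    have hnv : ‖v‖ = 0 := by
      simp [EuclideanSpace.norm_eq]
    simp [hv, hnv]
  · set F : EuclideanSpace 𝕜 (Fin n) → ℝ := fun v => ‖stmt15T μ n u v‖ with hF
    have hlip : LipschitzWith ‖u‖₊ F := by
      refine LipschitzWith.of_dist_le_mul fun v w => ?_
      rw [Real.dist_eq, dist_eq_norm]
      calc |F v - F w| ≤ ‖stmt15T μ n u v - stmt15T μ n u w‖ := abs_norm_sub_norm_le _ _
        _ = ‖stmt15T μ n u (v - w)‖ := by rw [stmt15T_sub]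
        _ ≤ ‖v - w‖ * ‖u‖ := stmt15T_norm_le μ u _
        _ = ↑‖u‖₊ * ‖v - w‖ := by rw [coe_nnnorm, mul_comm]
    have i0 : Fin n := ⟨0, hn⟩
    have hv₁ : EuclideanSpace.single i0 (1:𝕜) ∈ Metric.sphere (0 : EuclideanSpace 𝕜 (Fin n)) 1 := by
      simp [EuclideanSpace.norm_single]
    obtain ⟨v₀, hv₀, hmin⟩ := (isCompact_sphere (0 : EuclideanSpace 𝕜 (Fin n)) 1).exists_isMinOn
      ⟨_, hv₁⟩ hlip.continuous.continuousOn
    have hv₀n : ‖v₀‖ = 1 := by simpa using mem_sphere_zero_iff_norm.1 hv₀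
    set m := F v₀ with hm
    have hm0 : 0 < m := by
      rw [hm, hF]
      refine norm_pos_iff.2 fun h0 => ?_
      rw [stmt15T_eq_sum] at h0
      have hz := Fintype.linearIndependent_iff.1 hu (fun i => (starRingEnd 𝕜) (v₀ i)) h0
      have : v₀ = 0 := by
        ext i
        have := hz i
        simpa using this
      rw [this] at hv₀n
      simp at hv₀n
    refine ⟨m ^ 2, (‖u‖ + 1) ^ 2, by positivity, by positivity, fun v => ?_⟩
    rw [stmt15T_integral μ u v]
    by_cases hv : v = 0
    · subst hv
      simp [stmt15T_zero]
    · set r := ‖v‖ with hr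
      have hr0 : 0 < r := norm_pos_iff.2 hv
      set w : EuclideanSpace 𝕜 (Fin n) := ((r⁻¹ : ℝ) : 𝕜) • v with hw
      have hwn : ‖w‖ = 1 := by
        rw [hw, norm_smul, RCLike.norm_ofReal, abs_of_pos (by positivity), ← hr,
          inv_mul_cancel₀ hr0.ne']
      have hvw : v = ((r : ℝ) : 𝕜) • w := by
        rw [hw, smul_smul, ← RCLike.ofReal_mul, mul_inv_cancel₀ hr0.ne']
        simp
      have hFv : ‖stmt15T μ n u v‖ = r * F w := by
        rw [hvw, stmt15T_smul, norm_smul, RCLike.norm_conj, RCLike.norm_ofReal,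
          abs_of_pos hr0, hF]
      have h1 : m ≤ F w := hmin (mem_sphere_zero_iff_norm.2 hwn)
      have h2 : F w ≤ ‖u‖ := by simpa [hwn] using stmt15T_norm_le μ u w
      have hFw0 : 0 ≤ F w := norm_nonneg _
      have hu0 : 0 ≤ ‖u‖ := norm_nonneg _
      rw [hFv]
      have hsq : (r * F w) ^ 2 = F w ^ 2 * r ^ 2 := by ring
      constructor
      · have h3 : m ^ 2 ≤ F w ^ 2 := by nlinarith
        rw [hsq]
        exact mul_le_mul_of_nonneg_right h3 (sq_nonneg r)
      · have h4 : F w ^ 2 ≤ (‖u‖ + 1) ^ 2 := by nlinarith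
        rw [hsq]
        exact mul_le_mul_of_nonneg_right h4 (sq_nonneg r)

end LpStuff


theorem stmt15 {𝕜 X : Type*} [RCLike 𝕜] [MeasurableSpace X] (μ : Measure X) (n : ℕ)
    (hdim : (n : Cardinal) ≤ Module.rank 𝕜 (Lp 𝕜 2 μ)) :
    ({u : Lp (EuclideanSpace 𝕜 (Fin n)) 2 μ |
      ∃ A B : ℝ, 0 < A ∧ 0 < B ∧ ∀ v : EuclideanSpace 𝕜 (Fin n),
        A * ‖v‖ ^ 2 ≤ ∫ x, ‖(inner 𝕜 v (u x) : 𝕜)‖ ^ 2 ∂μ ∧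
        ∫ x, ‖(inner 𝕜 v (u x) : 𝕜)‖ ^ 2 ∂μ ≤ B * ‖v‖ ^ 2}).Nonempty ∧
    Dense {u : Lp (EuclideanSpace 𝕜 (Fin n)) 2 μ |
      ∃ A B : ℝ, 0 < A ∧ 0 < B ∧ ∀ v : EuclideanSpace 𝕜 (Fin n),
        A * ‖v‖ ^ 2 ≤ ∫ x, ‖(inner 𝕜 v (u x) : 𝕜)‖ ^ 2 ∂μ ∧
        ∫ x, ‖(inner 𝕜 v (u x) : 𝕜)‖ ^ 2 ∂μ ≤ B * ‖v‖ ^ 2} := by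
  obtain ⟨a, ha⟩ := exists_linearIndependent_of_le_rank hdim
  have key : ∀ u : Lp (EuclideanSpace 𝕜 (Fin n)) 2 μ,
      LinearIndependent 𝕜 (fun i => stmt15Comp μ n i u) →
      u ∈ {u : Lp (EuclideanSpace 𝕜 (Fin n)) 2 μ |
        ∃ A B : ℝ, 0 < A ∧ 0 < B ∧ ∀ v : EuclideanSpace 𝕜 (Fin n),
          A * ‖v‖ ^ 2 ≤ ∫ x, ‖(inner 𝕜 v (u x) : 𝕜)‖ ^ 2 ∂μ ∧
          ∫ x, ‖(inner 𝕜 v (u x) : 𝕜)‖ ^ 2 ∂μ ≤ B * ‖v‖ ^ 2} :=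
    fun u hu => stmt15_mem_of_indep μ u hu
  constructor
  · refine ⟨∑ i, stmt15Emb μ n i (a i), key _ ?_⟩
    have he : (fun i => stmt15Comp μ n i (∑ j, stmt15Emb μ n j (a j))) = a :=
      funext fun i => stmt15Comp_sum μ a i
    rw [he]
    exact ha
  · rw [Metric.dense_iff]
    intro u₀ ε hε
    set f : Fin n → Lp 𝕜 2 μ := fun i => stmt15Comp μ n i u₀ with hf
    set D : Lp (EuclideanSpace 𝕜 (Fin n)) 2 μ := ∑ i, stmt15Emb μ n i (a i - f i) with hD
    have hδ : 0 < ε / (‖D‖ + 1) := by positivity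
    obtain ⟨t, ht, hind⟩ := stmt15_exists_small_perturb a f ha hδ
    refine ⟨u₀ + ((t : ℝ) : 𝕜) • D, ?_, key _ ?_⟩
    · rw [Metric.mem_ball, dist_eq_norm, add_sub_cancel_left, norm_smul, RCLike.norm_ofReal]
      calc |t| * ‖D‖ ≤ |t| * (‖D‖ + 1) := by
            have := abs_nonneg t
            nlinarith [norm_nonneg D]
        _ < (ε / (‖D‖ + 1)) * (‖D‖ + 1) := by
            have hpos : (0:ℝ) < ‖D‖ + 1 := by positivity
            exact mul_lt_mul_of_pos_right ht hpos
        _ = ε := by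
            field_simp
    · have hc : (fun i => stmt15Comp μ n i (u₀ + ((t : ℝ) : 𝕜) • D))
          = fun i => f i + ((t : ℝ) : 𝕜) • (a i - f i) := by
        funext i
        rw [map_add, _root_.map_smul, hD, stmt15Comp_sum μ (fun j => a j - f j) i]
      rw [hc]
      exact hind
end

section
/- Let (X, Σ, μ) be a measure space with dim L²(X, μ; 𝔽) ≥ 3n. Then the set of continuous frames in L²(X, μ; 𝔽ⁿ) is path-connected (indeed polygonally connected): any two continuous frames u, v can be joined within the frame set by the concatenation of the two line segments from u to a and from a to v, for a suitable continuous frame a. -/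
open MeasureTheory

namespace Stmt16Aux

variable {𝕜 X : Type*} [RCLike 𝕜] [MeasurableSpace X] {μ : Measure X} {n : ℕ}

local notation "E" => EuclideanSpace 𝕜 (Fin n)

/-- The "component" of `u` in direction `v` : the L² function `x ↦ ⟪v, u x⟫`. -/
noncomputable def cmpnt (u : Lp (EuclideanSpace 𝕜 (Fin n)) 2 μ) (v : EuclideanSpace 𝕜 (Fin n)) :
    Lp 𝕜 2 μ := (innerSL 𝕜 v).compLp u

lemma cmpnt_coeFn (u : Lp (EuclideanSpace 𝕜 (Fin n)) 2 μ) (v : E) :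
    cmpnt u v =ᵐ[μ] fun x => (inner 𝕜 v (u x) : 𝕜) :=
  (innerSL 𝕜 v).coeFn_compLp' u

lemma norm_sq_eq_integral (f : Lp 𝕜 2 μ) : ‖f‖ ^ 2 = ∫ x, ‖f x‖ ^ 2 ∂μ := by
  have h1 : (inner 𝕜 f f : 𝕜) = ∫ x, (inner 𝕜 (f x) (f x) : 𝕜) ∂μ := L2.inner_def f f
  have h2 : ∫ x, (inner 𝕜 (f x) (f x) : 𝕜) ∂μ = ((∫ x, ‖f x‖ ^ 2 ∂μ : ℝ) : 𝕜) := by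
    rw [← integral_ofReal]
    refine integral_congr_ae (Filter.Eventually.of_forall fun x => ?_)
    show (inner 𝕜 (f x) (f x) : 𝕜) = _
    rw [inner_self_eq_norm_sq_to_K]
    push_cast
    ring
  have := InnerProductSpace.norm_sq_eq_re_inner (𝕜 := 𝕜) f
  rw [this, h1, h2, RCLike.ofReal_re]

lemma integral_eq (u : Lp (EuclideanSpace 𝕜 (Fin n)) 2 μ) (v : E) :
    ∫ x, ‖(inner 𝕜 v (u x) : 𝕜)‖ ^ 2 ∂μ = ‖cmpnt u v‖ ^ 2 := by
  rw [norm_sq_eq_integral]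
  refine integral_congr_ae ((cmpnt_coeFn u v).mono fun x hx => ?_)
  simp only [hx]

lemma cmpnt_add_left (u w : Lp (EuclideanSpace 𝕜 (Fin n)) 2 μ) (v : E) :
    cmpnt (u + w) v = cmpnt u v + cmpnt w v := by
  unfold cmpnt
  rw [show (innerSL 𝕜 v).compLp (u + w) = (innerSL 𝕜 v).compLpL 2 μ (u + w) from rfl]
  rw [map_add]; rfl

lemma cmpnt_smul_left (c : 𝕜) (u : Lp (EuclideanSpace 𝕜 (Fin n)) 2 μ) (v : E) :
    cmpnt (c • u) v = c • cmpnt u v := by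
  unfold cmpnt
  rw [show (innerSL 𝕜 v).compLp (c • u) = (innerSL 𝕜 v).compLpL 2 μ (c • u) from rfl]
  rw [_root_.map_smul]; rfl

lemma cmpnt_add_right (u : Lp (EuclideanSpace 𝕜 (Fin n)) 2 μ) (v w : E) :
    cmpnt u (v + w) = cmpnt u v + cmpnt u w := by
  unfold cmpnt
  rw [map_add, ContinuousLinearMap.add_compLp]

lemma cmpnt_smul_right (u : Lp (EuclideanSpace 𝕜 (Fin n)) 2 μ) (c : 𝕜) (v : E) :
    cmpnt u (c • v) = (starRingEnd 𝕜 c) • cmpnt u v := by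
  unfold cmpnt
  rw [map_smulₛₗ, ContinuousLinearMap.smul_compLp]

/-- `cmpnt u` as a conjugate-linear map. -/
noncomputable def cmpntL (u : Lp (EuclideanSpace 𝕜 (Fin n)) 2 μ) :
    (EuclideanSpace 𝕜 (Fin n)) →ₛₗ[starRingEnd 𝕜] Lp 𝕜 2 μ where
  toFun := cmpnt u
  map_add' := cmpnt_add_right u
  map_smul' c v := cmpnt_smul_right u c v

lemma norm_cmpnt_le (u : Lp (EuclideanSpace 𝕜 (Fin n)) 2 μ) (v : E) :
    ‖cmpnt u v‖ ≤ ‖v‖ * ‖u‖ := by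
  calc ‖cmpnt u v‖ ≤ ‖innerSL 𝕜 v‖ * ‖u‖ := ContinuousLinearMap.norm_compLp_le _ _
  _ = ‖v‖ * ‖u‖ := by rw [innerSL_apply_norm]


/-- the standard basis of `EuclideanSpace`. -/
noncomputable def ee (𝕜 : Type*) [RCLike 𝕜] {n : ℕ} (i : Fin n) : EuclideanSpace 𝕜 (Fin n) :=
  EuclideanSpace.single i (1 : 𝕜)

/-- Assemble an element of `Lp (EuclideanSpace 𝕜 (Fin n))` from `n` components. -/
noncomputable def asm (b : Fin n → Lp 𝕜 2 μ) : Lp (EuclideanSpace 𝕜 (Fin n)) 2 μ :=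
  ∑ i, (ContinuousLinearMap.toSpanSingleton 𝕜 (ee 𝕜 i)).compLp (b i)

lemma inner_ee_smul (c : 𝕜) (i j : Fin n) :
    (inner 𝕜 (ee 𝕜 j) (c • ee 𝕜 i) : 𝕜) = if i = j then c else 0 := by
  rw [inner_smul_right]
  unfold ee
  rw [EuclideanSpace.inner_single_right]
  simp only [EuclideanSpace.single_apply]
  rcases eq_or_ne i j with h | h
  · simp [h]
  · simp [h, Ne.symm h]

lemma cmpnt_single (f : Lp 𝕜 2 μ) (i j : Fin n) :
    cmpnt ((ContinuousLinearMap.toSpanSingleton 𝕜 (ee 𝕜 i)).compLp f) (ee 𝕜 j)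
      = if i = j then f else 0 := by
  rcases eq_or_ne i j with h | h
  · subst h
    simp only [if_pos rfl]
    refine Lp.ext ?_
    filter_upwards [cmpnt_coeFn ((ContinuousLinearMap.toSpanSingleton 𝕜 (ee 𝕜 i)).compLp f)
      (ee 𝕜 i), (ContinuousLinearMap.toSpanSingleton 𝕜 (ee 𝕜 i)).coeFn_compLp' f] with x h1 h2
    rw [h1, h2, ContinuousLinearMap.toSpanSingleton_apply, inner_ee_smul]
    simp
  · simp only [if_neg h]
    refine Lp.ext ?_
    filter_upwards [cmpnt_coeFn ((ContinuousLinearMap.toSpanSingleton 𝕜 (ee 𝕜 i)).compLp f)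
      (ee 𝕜 j), (ContinuousLinearMap.toSpanSingleton 𝕜 (ee 𝕜 i)).coeFn_compLp' f,
      Lp.coeFn_zero 𝕜 2 μ] with x h1 h2 h3
    rw [h1, h2, ContinuousLinearMap.toSpanSingleton_apply, inner_ee_smul, if_neg h, h3]
    simp

lemma cmpnt_asm (b : Fin n → Lp 𝕜 2 μ) (j : Fin n) : cmpnt (asm b) (ee 𝕜 j) = b j := by
  unfold asm cmpnt
  rw [show ((innerSL 𝕜 (ee 𝕜 j)).compLp (∑ i, (ContinuousLinearMap.toSpanSingleton 𝕜
      (ee 𝕜 i)).compLp (b i)) : Lp 𝕜 2 μ) = (innerSL 𝕜 (ee 𝕜 j)).compLpL 2 μ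
      (∑ i, (ContinuousLinearMap.toSpanSingleton 𝕜 (ee 𝕜 i)).compLp (b i)) from rfl]
  rw [map_sum]
  have : ∀ i, ((innerSL 𝕜 (ee 𝕜 j)).compLpL 2 μ)
      ((ContinuousLinearMap.toSpanSingleton 𝕜 (ee 𝕜 i)).compLp (b i)) = if i = j then b j else 0 := by
    intro i
    rw [show ((innerSL 𝕜 (ee 𝕜 j)).compLpL 2 μ)
      ((ContinuousLinearMap.toSpanSingleton 𝕜 (ee 𝕜 i)).compLp (b i)) = cmpnt
      ((ContinuousLinearMap.toSpanSingleton 𝕜 (ee 𝕜 i)).compLp (b i)) (ee 𝕜 j) from rfl, cmpnt_single]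
    split <;> simp_all
  rw [Finset.sum_congr rfl fun i _ => this i, Finset.sum_ite_eq' Finset.univ j fun _ => b j]
  simp

lemma cmpnt_sub_left (u w : Lp (EuclideanSpace 𝕜 (Fin n)) 2 μ) (v : EuclideanSpace 𝕜 (Fin n)) :
    cmpnt (u - w) v = cmpnt u v - cmpnt w v := by
  have : u - w + w = u := sub_add_cancel u w
  have h := cmpnt_add_left (u - w) w v
  rw [this] at h
  rw [eq_sub_iff_add_eq, ← h]

lemma rep (v : EuclideanSpace 𝕜 (Fin n)) : v = ∑ i, v i • ee 𝕜 i := by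
  ext j
  rw [show ((∑ i, v i • ee 𝕜 i : EuclideanSpace 𝕜 (Fin n)) j) = ∑ i, (v i • ee 𝕜 i) j from by
    rw [WithLp.ofLp_sum, Finset.sum_apply]]
  simp [ee, EuclideanSpace.single_apply]

lemma cmpnt_eq_sum (u : Lp (EuclideanSpace 𝕜 (Fin n)) 2 μ) (v : EuclideanSpace 𝕜 (Fin n)) :
    cmpnt u v = ∑ i, (starRingEnd 𝕜 (v i)) • cmpnt u (ee 𝕜 i) := by
  conv_lhs => rw [show cmpnt u v = cmpntL u v from rfl, rep v]
  rw [map_sum]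
  refine Finset.sum_congr rfl fun i _ => ?_
  rw [show cmpntL u (v i • ee 𝕜 i) = cmpnt u (v i • ee 𝕜 i) from rfl, cmpnt_smul_right]

lemma frame_iff (u : Lp (EuclideanSpace 𝕜 (Fin n)) 2 μ) :
    (∃ A B : ℝ, 0 < A ∧ 0 < B ∧ ∀ v : EuclideanSpace 𝕜 (Fin n),
        A * ‖v‖ ^ 2 ≤ ∫ x, ‖(inner 𝕜 v (u x) : 𝕜)‖ ^ 2 ∂μ ∧
        ∫ x, ‖(inner 𝕜 v (u x) : 𝕜)‖ ^ 2 ∂μ ≤ B * ‖v‖ ^ 2)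
    ↔ LinearIndependent 𝕜 (fun i => cmpnt u (ee 𝕜 i)) := by
  constructor
  · rintro ⟨A, B, hA, hB, h⟩
    rw [Fintype.linearIndependent_iff]
    intro c hc
    set v : EuclideanSpace 𝕜 (Fin n) := ∑ i, (starRingEnd 𝕜 (c i)) • ee 𝕜 i with hv
    have hvi : ∀ j, v j = starRingEnd 𝕜 (c j) := by
      intro j
      rw [hv, show ((∑ i, (starRingEnd 𝕜 (c i)) • ee 𝕜 i : EuclideanSpace 𝕜 (Fin n)) j)
        = ∑ i, ((starRingEnd 𝕜 (c i)) • ee 𝕜 i) j from by rw [WithLp.ofLp_sum, Finset.sum_apply]]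
      simp [ee, EuclideanSpace.single_apply]
    have hcv : cmpnt u v = 0 := by
      rw [cmpnt_eq_sum, ← hc]
      refine Finset.sum_congr rfl fun i _ => ?_
      rw [hvi i, RCLike.conj_conj]
    have h1 := (h v).1
    rw [integral_eq, hcv, norm_zero] at h1
    have hv0 : v = 0 := by
      by_contra hne
      have h3 : 0 < ‖v‖ := norm_pos_iff.mpr hne
      norm_num at h1
      nlinarith [mul_pos hA (pow_pos h3 2)]
    intro i
    have := hvi i
    rw [hv0] at this
    simpa using congrArg (starRingEnd 𝕜) this.symm
  · intro hli
    rcases Nat.eq_zero_or_pos n with hn | hn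
    · refine ⟨1, 1, one_pos, one_pos, fun v => ?_⟩
      subst hn
      have hv0 : v = 0 := Subsingleton.elim v 0
      subst hv0
      simp [integral_eq, show cmpnt u (0 : EuclideanSpace 𝕜 (Fin 0)) = 0 from map_zero (cmpntL u)]
    · have hinj : ∀ v : EuclideanSpace 𝕜 (Fin n), cmpnt u v = 0 → v = 0 := by
        intro v hv0
        rw [cmpnt_eq_sum] at hv0
        have := Fintype.linearIndependent_iff.mp hli (fun i => starRingEnd 𝕜 (v i)) hv0
        ext j
        simpa using congrArg (starRingEnd 𝕜) (this j)
      have hlipc : Continuous fun v : EuclideanSpace 𝕜 (Fin n) => ‖cmpnt u v‖ := by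
        have : LipschitzWith ‖u‖₊ (fun v : EuclideanSpace 𝕜 (Fin n) => cmpnt u v) := by
          refine LipschitzWith.of_dist_le_mul fun v w => ?_
          rw [dist_eq_norm, dist_eq_norm]
          have : cmpnt u v - cmpnt u w = cmpnt u (v - w) := (map_sub (cmpntL u) v w).symm
          rw [this]
          calc ‖cmpnt u (v - w)‖ ≤ ‖v - w‖ * ‖u‖ := norm_cmpnt_le u (v - w)
          _ = ‖u‖₊ * ‖v - w‖ := by rw [mul_comm]; rfl
        exact this.continuous.norm
      have hne : (Metric.sphere (0 : EuclideanSpace 𝕜 (Fin n)) 1).Nonempty := by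
        have h0 : (ee 𝕜 ⟨0, hn⟩ : EuclideanSpace 𝕜 (Fin n)) ≠ 0 := by
          intro hcon
          have := congrFun (congrArg (fun f : EuclideanSpace 𝕜 (Fin n) => (f : Fin n → 𝕜)) hcon)
            ⟨0, hn⟩
          simp [ee, EuclideanSpace.single_apply] at this
        haveI : Nontrivial (EuclideanSpace 𝕜 (Fin n)) := nontrivial_of_ne _ 0 h0
        exact NormedSpace.sphere_nonempty.mpr zero_le_one
      obtain ⟨z, hz, hmin'⟩ := (isCompact_sphere (0 : EuclideanSpace 𝕜 (Fin n)) 1).exists_isMinOn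
        hne hlipc.continuousOn
      have hmin : ∀ y ∈ Metric.sphere (0 : EuclideanSpace 𝕜 (Fin n)) 1,
          ‖cmpnt u z‖ ≤ ‖cmpnt u y‖ := fun y hy => hmin' hy
      have hz1 : ‖z‖ = 1 := by simpa using hz
      have hz0 : z ≠ 0 := by intro hcon; rw [hcon, norm_zero] at hz1; norm_num at hz1
      have hzpos : 0 < ‖cmpnt u z‖ := by
        rcases (norm_nonneg (cmpnt u z)).lt_or_eq with h' | h'
        · exact h'
        · exact absurd (hinj z (norm_eq_zero.mp h'.symm)) hz0
      refine ⟨‖cmpnt u z‖ ^ 2, ‖u‖ ^ 2 + 1, by positivity, by positivity, fun v => ?_⟩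
      rw [integral_eq]
      constructor
      · rcases eq_or_ne v 0 with hv | hv
        · subst hv
          simp [show cmpnt u (0 : EuclideanSpace 𝕜 (Fin n)) = 0 from map_zero (cmpntL u)]
        · have hr : 0 < ‖v‖ := norm_pos_iff.mpr hv
          set w : EuclideanSpace 𝕜 (Fin n) := ((‖v‖⁻¹ : ℝ) : 𝕜) • v with hw
          have hw1 : ‖w‖ = 1 := by
            rw [hw, norm_smul, RCLike.norm_ofReal, abs_of_pos (by positivity)]
            field_simp
          have hmw := hmin w (by simpa using hw1)
          have hcw : ‖cmpnt u w‖ = ‖v‖⁻¹ * ‖cmpnt u v‖ := by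
            rw [hw, cmpnt_smul_right, norm_smul, RCLike.norm_conj, RCLike.norm_ofReal,
              abs_of_pos (by positivity)]
          rw [hcw] at hmw
          have h2 : ‖cmpnt u z‖ * ‖v‖ ≤ ‖cmpnt u v‖ := by
            have := mul_le_mul_of_nonneg_right hmw hr.le
            rwa [inv_mul_eq_div, div_mul_cancel₀ _ hr.ne'] at this
          have h4 : (‖cmpnt u z‖ * ‖v‖) ^ 2 ≤ ‖cmpnt u v‖ ^ 2 :=
            pow_le_pow_left₀ (by positivity) h2 2
          nlinarith [h4]
      · have := norm_cmpnt_le u v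
        nlinarith [norm_nonneg (cmpnt u v), norm_nonneg v, norm_nonneg u]

end Stmt16Aux

section LinAlg

variable {K V : Type*} [Field K] [AddCommGroup V] [Module K V] {n : ℕ}

lemma indep_combo {f g : Fin n → V} (hf : LinearIndependent K f) (hg : LinearIndependent K g)
    (hd : Disjoint (Submodule.span K (Set.range f)) (Submodule.span K (Set.range g)))
    {c d : K} (h : c ≠ 0 ∨ d ≠ 0) :
    LinearIndependent K (fun i => c • f i + d • g i) := by
  rw [Fintype.linearIndependent_iff]
  intro l hl
  have hx : (∑ i, l i • f i) ∈ Submodule.span K (Set.range f) :=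
    Submodule.sum_mem _ fun i _ => Submodule.smul_mem _ _ (Submodule.subset_span ⟨i, rfl⟩)
  have hy : (∑ i, l i • g i) ∈ Submodule.span K (Set.range g) :=
    Submodule.sum_mem _ fun i _ => Submodule.smul_mem _ _ (Submodule.subset_span ⟨i, rfl⟩)
  have key : c • (∑ i, l i • f i) + d • (∑ i, l i • g i) = 0 := by
    rw [Finset.smul_sum, Finset.smul_sum, ← Finset.sum_add_distrib, ← hl]
    refine Finset.sum_congr rfl fun i _ => ?_
    rw [smul_add, smul_comm c (l i), smul_comm d (l i)]
  have hcx : c • (∑ i, l i • f i) = 0 := by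
    have h1 : c • (∑ i, l i • f i) ∈ Submodule.span K (Set.range f) :=
      Submodule.smul_mem _ _ hx
    have h2 : c • (∑ i, l i • f i) ∈ Submodule.span K (Set.range g) := by
      have : c • (∑ i, l i • f i) = -(d • (∑ i, l i • g i)) := by
        rw [eq_neg_iff_add_eq_zero]; exact key
      rw [this]
      exact Submodule.neg_mem _ (Submodule.smul_mem _ _ hy)
    exact Submodule.disjoint_def.mp hd _ h1 h2
  have hdy : d • (∑ i, l i • g i) = 0 := by
    rw [hcx, zero_add] at key; exact key
  rcases h with hc | hdne
  · have : (∑ i, l i • f i) = 0 := by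
      have := congrArg (fun z => c⁻¹ • z) hcx
      simpa [smul_smul, inv_mul_cancel₀ hc] using this
    exact Fintype.linearIndependent_iff.mp hf l this
  · have : (∑ i, l i • g i) = 0 := by
      have := congrArg (fun z => d⁻¹ • z) hdy
      simpa [smul_smul, inv_mul_cancel₀ hdne] using this
    exact Fintype.linearIndependent_iff.mp hg l this

lemma exists_transversal (hrank : ((3 * n : ℕ) : Cardinal) ≤ Module.rank K V)
    (f g : Fin n → V) :
    ∃ h : Fin n → V, LinearIndependent K h ∧
      Disjoint (Submodule.span K (Set.range h))
        (Submodule.span K (Set.range f ∪ Set.range g)) := by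
  classical
  set W := Submodule.span K (Set.range f ∪ Set.range g) with hW
  have hrankW : Module.rank K W ≤ ((2 * n : ℕ) : Cardinal) := by
    refine (rank_span_le _).trans ?_
    refine (Cardinal.mk_union_le _ _).trans ?_
    have h1 : Cardinal.mk (Set.range f) ≤ (n : Cardinal) := by
      simpa using Cardinal.mk_range_le_lift (f := f)
    have h2 : Cardinal.mk (Set.range g) ≤ (n : Cardinal) := by
      simpa using Cardinal.mk_range_le_lift (f := g)
    calc Cardinal.mk (Set.range f) + Cardinal.mk (Set.range g) ≤ (n : Cardinal) + (n : Cardinal) :=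
          add_le_add h1 h2
    _ = ((2 * n : ℕ) : Cardinal) := by push_cast; ring
  have hquot : ((n : ℕ) : Cardinal) ≤ Module.rank K (V ⧸ W) := by
    have hsum : Module.rank K (V ⧸ W) + Module.rank K W = Module.rank K V :=
      Submodule.rank_quotient_add_rank W
    by_cases hq : (Cardinal.aleph0 : Cardinal) ≤ Module.rank K (V ⧸ W)
    · exact le_trans (le_of_lt (Cardinal.nat_lt_aleph0 n)) hq
    · push_neg at hq
      obtain ⟨m, hm⟩ := Cardinal.lt_aleph0.mp hq
      have h3 : ((3 * n : ℕ) : Cardinal) ≤ ((m + 2 * n : ℕ) : Cardinal) := by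
        calc ((3 * n : ℕ) : Cardinal) ≤ Module.rank K V := hrank
        _ = Module.rank K (V ⧸ W) + Module.rank K W := hsum.symm
        _ ≤ ((m : ℕ) : Cardinal) + ((2 * n : ℕ) : Cardinal) := by
              rw [hm]; exact add_le_add le_rfl hrankW
        _ = ((m + 2 * n : ℕ) : Cardinal) := by push_cast; ring
      have h4 : 3 * n ≤ m + 2 * n := by exact_mod_cast h3
      have h5 : n ≤ m := by omega
      rw [hm]
      exact_mod_cast Nat.cast_le.mpr h5
  obtain ⟨s, hcard, hs⟩ := le_rank_iff_exists_linearIndependent_finset.mp hquot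
  let e : Fin n → {x : V ⧸ W // x ∈ (s : Set (V ⧸ W))} := fun i =>
    ⟨(s.equivFin.symm (Fin.cast hcard.symm i) : V ⧸ W), by
      simpa using (s.equivFin.symm (Fin.cast hcard.symm i)).2⟩
  have heinj : Function.Injective e := by
    intro a b hab
    have : s.equivFin.symm (Fin.cast hcard.symm a) = s.equivFin.symm (Fin.cast hcard.symm b) := by
      apply Subtype.ext
      exact congrArg Subtype.val hab
    have := s.equivFin.symm.injective this
    exact Fin.cast_injective _ this
  have hφli : LinearIndependent K fun i => ((e i : V ⧸ W)) := hs.comp e heinj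
  set φ : Fin n → V ⧸ W := fun i => (e i : V ⧸ W) with hφ
  have hlift : ∀ i, ∃ y : V, W.mkQ y = φ i := fun i => W.mkQ_surjective (φ i)
  choose h hh using hlift
  have hcomp : W.mkQ ∘ h = φ := funext fun i => hh i
  refine ⟨h, ?_, ?_⟩
  · exact LinearIndependent.of_comp W.mkQ (by rw [hcomp]; exact hφli)
  · rw [Submodule.disjoint_def]
    intro x hx hxW
    obtain ⟨c, hc⟩ := (Submodule.mem_span_range_iff_exists_fun K).mp hx
    have hmk : W.mkQ x = 0 := (Submodule.Quotient.mk_eq_zero W).mpr hxW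
    have hsum : ∑ i, c i • φ i = 0 := by
      rw [← hcomp]
      have := congrArg W.mkQ hc
      rw [map_sum] at this
      simp only [_root_.map_smul] at this
      rw [hmk] at this
      simpa using this
    have hc0 := Fintype.linearIndependent_iff.mp hφli c hsum
    rw [← hc]
    simp [hc0]

end LinAlg

namespace Stmt16Aux

variable {𝕜 X : Type*} [RCLike 𝕜] [MeasurableSpace X] {μ : Measure X} {n : ℕ}

lemma joined_aux {S : Set (Lp (EuclideanSpace 𝕜 (Fin n)) 2 μ)}
    (hS : ∀ w, w ∈ S ↔ LinearIndependent 𝕜 fun i => cmpnt w (ee 𝕜 i))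
    (u a : Lp (EuclideanSpace 𝕜 (Fin n)) 2 μ) (hu : u ∈ S) (ha : a ∈ S)
    (hd : Disjoint (Submodule.span 𝕜 (Set.range fun i => cmpnt u (ee 𝕜 i)))
      (Submodule.span 𝕜 (Set.range fun i => cmpnt a (ee 𝕜 i)))) :
    JoinedIn S u a := by
  have hmem : ∀ t : ℝ, (((1 - t : ℝ) : 𝕜) • u + ((t : ℝ) : 𝕜) • a) ∈ S := by
    intro t
    rw [hS]
    have hcomp : ∀ i, cmpnt (((1 - t : ℝ) : 𝕜) • u + ((t : ℝ) : 𝕜) • a) (ee 𝕜 i)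
        = ((1 - t : ℝ) : 𝕜) • cmpnt u (ee 𝕜 i) + ((t : ℝ) : 𝕜) • cmpnt a (ee 𝕜 i) := by
      intro i; rw [cmpnt_add_left, cmpnt_smul_left, cmpnt_smul_left]
    have hne : ((1 - t : ℝ) : 𝕜) ≠ 0 ∨ ((t : ℝ) : 𝕜) ≠ 0 := by
      rcases eq_or_ne t 0 with h | h
      · left; simp [h]
      · right; simpa using h
    have := indep_combo ((hS u).mp hu) ((hS a).mp ha) hd hne
    simp only [hcomp]
    exact this
  have hcont : Continuous fun t : unitInterval =>
      (((1 - (t : ℝ) : ℝ) : 𝕜) • u + (((t : ℝ) : ℝ) : 𝕜) • a) := by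
    have h1 : Continuous fun t : unitInterval => (t : ℝ) := continuous_subtype_val
    have h2 : Continuous fun t : unitInterval => ((1 - (t : ℝ) : ℝ) : 𝕜) :=
      RCLike.continuous_ofReal.comp (continuous_const.sub h1)
    have h3 : Continuous fun t : unitInterval => (((t : ℝ) : ℝ) : 𝕜) :=
      RCLike.continuous_ofReal.comp h1
    exact (h2.smul continuous_const).add (h3.smul continuous_const)
  refine ⟨⟨⟨fun t => (((1 - (t : ℝ) : ℝ) : 𝕜) • u + (((t : ℝ) : ℝ) : 𝕜) • a), hcont⟩,
    by simp, by simp⟩, fun t => hmem (t : ℝ)⟩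

end Stmt16Aux

open Stmt16Aux in
theorem stmt16 {𝕜 X : Type*} [RCLike 𝕜] [MeasurableSpace X] (μ : Measure X) (n : ℕ)
    (hdim : ((3 * n : ℕ) : Cardinal) ≤ Module.rank 𝕜 (Lp 𝕜 2 μ)) :
    IsPathConnected {u : Lp (EuclideanSpace 𝕜 (Fin n)) 2 μ |
      ∃ A B : ℝ, 0 < A ∧ 0 < B ∧ ∀ v : EuclideanSpace 𝕜 (Fin n),
        A * ‖v‖ ^ 2 ≤ ∫ x, ‖(inner 𝕜 v (u x) : 𝕜)‖ ^ 2 ∂μ ∧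
        ∫ x, ‖(inner 𝕜 v (u x) : 𝕜)‖ ^ 2 ∂μ ≤ B * ‖v‖ ^ 2} := by
  set S : Set (Lp (EuclideanSpace 𝕜 (Fin n)) 2 μ) :=
    {u : Lp (EuclideanSpace 𝕜 (Fin n)) 2 μ |
      ∃ A B : ℝ, 0 < A ∧ 0 < B ∧ ∀ v : EuclideanSpace 𝕜 (Fin n),
        A * ‖v‖ ^ 2 ≤ ∫ x, ‖(inner 𝕜 v (u x) : 𝕜)‖ ^ 2 ∂μ ∧
        ∫ x, ‖(inner 𝕜 v (u x) : 𝕜)‖ ^ 2 ∂μ ≤ B * ‖v‖ ^ 2} with hSdef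
  have hS : ∀ w, w ∈ S ↔ LinearIndependent 𝕜 fun i => cmpnt w (ee 𝕜 i) := fun w => frame_iff w
  rw [isPathConnected_iff]
  constructor
  · obtain ⟨b, hbli, -⟩ := exists_transversal hdim (fun _ : Fin n => (0 : Lp 𝕜 2 μ)) (fun _ => 0)
    refine ⟨asm b, (hS (asm b)).mpr ?_⟩
    simp only [cmpnt_asm]
    exact hbli
  · intro u hu v hv
    obtain ⟨b, hbli, hbd⟩ := exists_transversal hdim (fun i => cmpnt u (ee 𝕜 i))
      (fun i => cmpnt v (ee 𝕜 i))
    set a := asm b with ha_def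
    have ha : a ∈ S := by
      rw [hS]
      simp only [ha_def, cmpnt_asm]
      exact hbli
    have hrange : (Set.range fun i => cmpnt a (ee 𝕜 i)) = Set.range b := by
      simp only [ha_def, cmpnt_asm]
    have hdu : Disjoint (Submodule.span 𝕜 (Set.range fun i => cmpnt u (ee 𝕜 i)))
        (Submodule.span 𝕜 (Set.range fun i => cmpnt a (ee 𝕜 i))) := by
      rw [hrange]
      exact hbd.symm.mono_left (Submodule.span_mono Set.subset_union_left)
    have hdv : Disjoint (Submodule.span 𝕜 (Set.range fun i => cmpnt v (ee 𝕜 i)))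
        (Submodule.span 𝕜 (Set.range fun i => cmpnt a (ee 𝕜 i))) := by
      rw [hrange]
      exact hbd.symm.mono_left (Submodule.span_mono Set.subset_union_right)
    exact (joined_aux hS u a hu ha hdu).trans (joined_aux hS v a hv ha hdv).symm
end
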